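/- With w = 2cpq/(pq+2c(mp+nq)) + 2c and v_a = −2cpq/(a(pq+2c(mp+nq))) + 1, the Miura relation (p+q+w−ŵ̃)·ṽ_a = (p−a)v_a + (q+a)v̂̃_a holds at all lattice points where denominators are nonzero. -/

import Mathlib

/-- Miura relation `(p+q+w−ŵ̃)·ṽ_a = (p−a)v_a + (q+a)v̂̃_a` between the N=2
rational lpKdV and lpmKdV solutions. -/
theorem stmt_6 (p q c a : ℝ) (hp : p ≠ 0) (hq : q ≠ 0) (hc : c ≠ 0) (ha : a ≠ 0)
    (w v : ℤ → ℤ → ℝ)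
    (hw : ∀ n m : ℤ, w n m = 2*c*p*q / (p*q + 2*c*((m : ℝ)*p + (n : ℝ)*q)) + 2*c)
    (hv : ∀ n m : ℤ, v n m = -(2*c*p*q) / (a * (p*q + 2*c*((m : ℝ)*p + (n : ℝ)*q))) + 1)
    (n m : ℤ)
    (h1 : p*q + 2*c*((m : ℝ)*p + (n : ℝ)*q) ≠ 0)
    (h2 : p*q + 2*c*((m : ℝ)*p + ((n : ℝ)+1)*q) ≠ 0)
    (h3 : p*q + 2*c*(((m : ℝ)+1)*p + (n : ℝ)*q) ≠ 0)
    (h4 : p*q + 2*c*(((m : ℝ)+1)*p + ((n : ℝ)+1)*q) ≠ 0) :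
    (p + q + w n m - w (n+1) (m+1)) * v (n+1) m
      = (p - a) * v n m + (q + a) * v (n+1) (m+1) := by
  simp only [hw, hv, Int.cast_add, Int.cast_one]
  have h1' : p * q + 2 * c * (p * (m:ℝ) + q * n) ≠ 0 := by convert h1 using 3; ring
  have h2' : p * q + 2 * c * (p * (m:ℝ) + q * (n + 1)) ≠ 0 := by convert h2 using 3; ring
  have h4' : p * q + 2 * c * (p * ((m:ℝ) + 1) + q * (n + 1)) ≠ 0 := by convert h4 using 3; ring
  field_simp
  ring
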